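/- For every natural number N > 0, divisor d with 1 ≤ d < 2^N, and dividend n with 0 ≤ n < 2^N, letting p = ⌈log₂ d⌉, m = ⌈2^(N+p)/d⌉, m_lo = m - 2^N, and q = ⌊m_lo · n / 2^N⌋, we have ⌊n/d⌋ = ⌊(n + q)/2^p⌋. -/

import Mathlib

theorem stmt6 (N : ℕ) (hN : 0 < N) (d : ℕ) (hd1 : 1 ≤ d) (hd2 : d < 2 ^ N)
    (n : ℕ) (hn : n < 2 ^ N) (m : ℕ)
    (hm : (m : ℤ) = ⌈(2 : ℚ) ^ (N + Nat.clog 2 d) / d⌉) :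
    n / d = (n + (m - 2 ^ N) * n / 2 ^ N) / 2 ^ (Nat.clog 2 d) := by
  set p := Nat.clog 2 d with hp
  have hdposQ : (0:ℚ) < d := by exact_mod_cast hd1
  have hdle : d ≤ 2 ^ p := Nat.le_pow_clog (by norm_num) d
  -- lower bound on m*d
  have h1 : 2 ^ (N + p) ≤ m * d := by
    have h := Int.le_ceil ((2 : ℚ) ^ (N + p) / d)
    rw [← hm] at h
    have h' : (2:ℚ) ^ (N+p) / d ≤ (m:ℚ) := by exact_mod_cast h
    have h'' := (div_le_iff₀ hdposQ).mp h'
    exact_mod_cast h''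
  -- upper bound on m*d
  have h2 : m * d < 2 ^ (N + p) + d := by
    have h := Int.ceil_lt_add_one ((2 : ℚ) ^ (N + p) / d)
    rw [← hm] at h
    have h' : (m:ℚ) < (2:ℚ) ^ (N+p) / d + 1 := by exact_mod_cast h
    have h'' : (m:ℚ) * d < ((2:ℚ)^(N+p)/d + 1) * d :=
      mul_lt_mul_of_pos_right h' hdposQ
    rw [add_mul, div_mul_cancel₀ _ (ne_of_gt hdposQ), one_mul] at h''
    exact_mod_cast h''
  have hNp : (2:ℕ)^(N+p) = 2^N * 2^p := pow_add 2 N p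
  have hm2N : 2 ^ N ≤ m := by
    have : 2 ^ N * d ≤ m * d := le_trans (by
      calc 2^N * d ≤ 2^N * 2^p := Nat.mul_le_mul_left _ hdle
        _ = 2^(N+p) := hNp.symm) h1
    exact Nat.le_of_mul_le_mul_right this hd1
  have h2Npos : 0 < (2:ℕ)^N := pow_pos (by norm_num : (0:ℕ) < 2) N
  -- rewrite RHS numerator
  have key : n + (m - 2 ^ N) * n / 2 ^ N = m * n / 2 ^ N := by
    have hsub : (m - 2^N) * n + n * 2^N = m * n := by
      rw [Nat.sub_mul, Nat.mul_comm n (2^N)]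
      have : 2^N * n ≤ m * n := Nat.mul_le_mul_right _ hm2N
      omega
    rw [add_comm, ← Nat.add_mul_div_right _ n h2Npos, hsub]
  rw [key, Nat.div_div_eq_div_mul, ← pow_add]
  -- now show n / d = m * n / 2^(N+p)
  apply le_antisymm
  · rw [Nat.le_div_iff_mul_le (pow_pos (by norm_num : (0:ℕ) < 2) _)]
    calc n / d * 2^(N+p) ≤ n / d * (m * d) := Nat.mul_le_mul_left _ h1
      _ = m * (n / d * d) := by ring
      _ ≤ m * n := Nat.mul_le_mul_left _ (Nat.div_mul_le_self n d)
  · have hlt : m * n < (n / d + 1) * 2^(N+p) := by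
      rcases Nat.eq_zero_or_pos n with hn0 | hn0
      · subst hn0; simp only [Nat.mul_zero, Nat.zero_div, Nat.zero_add, Nat.one_mul]; exact pow_pos (by norm_num : (0:ℕ) < 2) (N+p)
      have hqr : n = d * (n / d) + n % d := (Nat.div_add_mod n d).symm
      have hr : n % d < d := Nat.mod_lt n hd1
      -- multiply goal by d and use h2
      have hmul : m * n * d < (n / d + 1) * 2^(N+p) * d := by
        have e1 : m * n * d = (m * d) * n := by ring
        rw [e1]
        have e2 : (m*d) * n ≤ (2^(N+p) + d - 1) * n :=
          Nat.mul_le_mul_right _ (by omega)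
        apply lt_of_le_of_lt e2
        have hrle : n % d ≤ d - 1 := by omega
        have hdn : (d - 1) * n < 2^(N+p) := by
          calc (d-1) * n < d * 2^N := by
                have : (d-1) * n ≤ (d-1) * (2^N - 1) :=
                  Nat.mul_le_mul_left _ (by omega)
                have h3 : (d-1) * (2^N - 1) < d * 2^N :=
                  lt_of_le_of_lt (Nat.mul_le_mul_left _ (Nat.sub_le _ _))
                    ((Nat.mul_lt_mul_right h2Npos).mpr (by omega))
                omega
            _ ≤ 2^p * 2^N := Nat.mul_le_mul_right _ hdle
            _ = 2^(N+p) := by rw [hNp]; ring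
        calc (2^(N+p) + d - 1) * n = 2^(N+p) * n + (d-1) * n := by
              rw [Nat.add_sub_assoc hd1, Nat.add_mul, Nat.sub_mul]
            _ = 2^(N+p) * (d * (n/d) + n % d) + (d-1)*n := by rw [← hqr]
            _ ≤ 2^(N+p) * (d * (n/d)) + 2^(N+p) * (d - 1) + (d-1)*n := by
              rw [Nat.mul_add]
              have : 2^(N+p) * (n % d) ≤ 2^(N+p) * (d-1) :=
                Nat.mul_le_mul_left _ hrle
              omega
            _ < 2^(N+p) * (d * (n/d)) + 2^(N+p) * (d - 1) + 2^(N+p) := by omega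
            _ = (n / d + 1) * 2^(N+p) * d := by
              have h' : 2^(N+p)*(d-1) + 2^(N+p) = 2^(N+p)*d := by
                rw [← Nat.mul_succ]; congr 1; omega
              calc 2^(N+p) * (d * (n/d)) + 2^(N+p)*(d-1) + 2^(N+p)
                  = 2^(N+p)*(d*(n/d)) + (2^(N+p)*(d-1) + 2^(N+p)) := by ring
                _ = 2^(N+p)*(d*(n/d)) + 2^(N+p)*d := by rw [h']
                _ = (n/d+1)*2^(N+p)*d := by ring
      exact Nat.lt_of_mul_lt_mul_right hmul
    have := Nat.div_lt_iff_lt_mul (pow_pos (by norm_num : (0:ℕ) < 2) (N+p)) |>.mpr hlt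
    omega
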